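/- Let K and J be subgroups of G that are separated by 𝒪 (i.e., not inseparable), with J subconjugate to K. Then any subgroup of J is also separated from K by 𝒪. -/
import Mathlib


/-- A transfer system on a group `G`: a partial order `rel` on subgroups refining the
subgroup relation, closed under conjugation and restriction. -/
structure TransferSystem (G : Type*) [Group G] where
  rel : Subgroup G → Subgroup G → Prop
  le_of_rel : ∀ {K H : Subgroup G}, rel K H → K ≤ H
  refl : ∀ H : Subgroup G, rel H H
  trans : ∀ {J K H : Subgroup G}, rel J K → rel K H → rel J H
  antisymm : ∀ {K H : Subgroup G}, rel K H → rel H K → K = H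
  conj : ∀ (g : G) {K H : Subgroup G}, rel K H →
    rel (K.map (MulAut.conj g).toMonoidHom) (H.map (MulAut.conj g).toMonoidHom)
  restrict : ∀ {K H L : Subgroup G}, rel K H → L ≤ H → rel (K ⊓ L) L

/-- Conjugate subgroup `gKg⁻¹`. -/
def conjSub {G : Type*} [Group G] (g : G) (K : Subgroup G) : Subgroup G :=
  K.map (MulAut.conj g).toMonoidHom

/-- `H_𝒪(J)`: the minimal subgroup containing `J` which transfers to `G` (the top subgroup). -/
noncomputable def HO {G : Type*} [Group G] (O : TransferSystem G) (J : Subgroup G) : Subgroup G :=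
  sInf {H : Subgroup G | O.rel H ⊤ ∧ J ≤ H}

/-- `J ∈ [H]^𝒪`: the inseparability class of `H`, i.e. `H_𝒪(J)` is conjugate to `H`. -/
def inClass {G : Type*} [Group G] (O : TransferSystem G) (H J : Subgroup G) : Prop :=
  ∃ g : G, conjSub g (HO O J) = H

/-- `J` and `K` are 𝒪-inseparable: `H_𝒪(J)` and `H_𝒪(K)` are conjugate. -/
def TSInseparable {G : Type*} [Group G] (O : TransferSystem G) (J K : Subgroup G) : Prop :=
  ∃ g : G, conjSub g (HO O J) = HO O K


section AuxConjSub
variable {G : Type*} [Group G]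

lemma conjSub_mono (g : G) {A B : Subgroup G} (h : A ≤ B) :
    conjSub g A ≤ conjSub g B := Subgroup.map_mono h

lemma conjSub_conjSub (g h : G) (A : Subgroup G) :
    conjSub g (conjSub h A) = conjSub (g * h) A := by
  simp only [conjSub, Subgroup.map_map, map_mul]
  rfl

lemma conjSub_one (A : Subgroup G) : conjSub 1 A = A := by
  ext x
  simp [conjSub, Subgroup.mem_map]

lemma conjSub_inv_conjSub (g : G) (A : Subgroup G) : conjSub g⁻¹ (conjSub g A) = A := by
  rw [conjSub_conjSub, inv_mul_cancel, conjSub_one]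

lemma conjSub_conjSub_inv (g : G) (A : Subgroup G) : conjSub g (conjSub g⁻¹ A) = A := by
  rw [conjSub_conjSub, mul_inv_cancel, conjSub_one]

lemma conjSub_top (g : G) : conjSub g (⊤ : Subgroup G) = ⊤ :=
  Subgroup.map_top_of_surjective _ (MulEquiv.surjective _)

lemma card_conjSub (g : G) (A : Subgroup G) : Nat.card (conjSub g A) = Nat.card A :=
  (Nat.card_congr (A.equivMapOfInjective _ (MulEquiv.injective _)).toEquiv).symm

lemma eq_of_conjSub_le [Finite G] (g : G) (A : Subgroup G) (h : conjSub g A ≤ A) :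
    conjSub g A = A :=
  Subgroup.eq_of_le_of_card_ge h (card_conjSub g A).ge

lemma rel_conjSub_top_iff (O : TransferSystem G) (g : G) (H : Subgroup G) :
    O.rel (conjSub g H) ⊤ ↔ O.rel H ⊤ := by
  constructor
  · intro h
    have := O.conj g⁻¹ h
    rwa [show Subgroup.map (MulAut.conj g⁻¹).toMonoidHom (conjSub g H)
          = conjSub g⁻¹ (conjSub g H) from rfl,
        show Subgroup.map (MulAut.conj g⁻¹).toMonoidHom (⊤ : Subgroup G)
          = conjSub g⁻¹ (⊤ : Subgroup G) from rfl,
        conjSub_inv_conjSub, conjSub_top] at this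
  · intro h
    have := O.conj g h
    rwa [show Subgroup.map (MulAut.conj g).toMonoidHom (⊤ : Subgroup G)
          = conjSub g (⊤ : Subgroup G) from rfl, conjSub_top] at this

lemma HO_mono (O : TransferSystem G) {A B : Subgroup G} (h : A ≤ B) :
    HO O A ≤ HO O B := by
  apply sInf_le_sInf
  rintro H ⟨h1, h2⟩
  exact ⟨h1, h.trans h2⟩

lemma mem_HOset_conj_iff (O : TransferSystem G) (g : G) (J H : Subgroup G) :
    H ∈ {H : Subgroup G | O.rel H ⊤ ∧ conjSub g J ≤ H} ↔
      conjSub g⁻¹ H ∈ {H : Subgroup G | O.rel H ⊤ ∧ J ≤ H} := by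
  constructor
  · rintro ⟨h1, h2⟩
    refine ⟨(rel_conjSub_top_iff O g⁻¹ H).mpr h1, ?_⟩
    have := conjSub_mono g⁻¹ h2
    rwa [conjSub_inv_conjSub] at this
  · rintro ⟨h1, h2⟩
    refine ⟨by rwa [← conjSub_conjSub_inv g H, rel_conjSub_top_iff], ?_⟩
    have := conjSub_mono g h2
    rwa [conjSub_conjSub_inv] at this

lemma HO_conjSub (O : TransferSystem G) (g : G) (J : Subgroup G) :
    HO O (conjSub g J) = conjSub g (HO O J) := by
  apply le_antisymm
  · -- sInf S' ≤ conjSub g (sInf S)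
    have h1 : conjSub g⁻¹ (HO O (conjSub g J)) ≤ HO O J := by
      apply le_sInf
      intro H hH
      have hmem : conjSub g H ∈ {H : Subgroup G | O.rel H ⊤ ∧ conjSub g J ≤ H} := by
        rw [mem_HOset_conj_iff, conjSub_inv_conjSub]
        exact hH
      have := sInf_le hmem
      have := conjSub_mono g⁻¹ this
      rwa [conjSub_inv_conjSub] at this
    have := conjSub_mono g h1
    rwa [conjSub_conjSub_inv] at this
  · apply le_sInf
    intro H hH
    rw [mem_HOset_conj_iff] at hH
    have := conjSub_mono g (sInf_le hH)
    rwa [conjSub_conjSub_inv] at this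

end AuxConjSub

/-- If `J` and `K` are separated by 𝒪 and `J` is subconjugate to `K`, then every subgroup of
`J` is also separated from `K`. -/
theorem separated_of_le_of_separated {G : Type*} [Group G] [Finite G] (O : TransferSystem G)
    (J K : Subgroup G) (hsep : ¬ TSInseparable O J K)
    (hsub : ∃ g : G, conjSub g J ≤ K) :
    ∀ J₀ : Subgroup G, J₀ ≤ J → ¬ TSInseparable O J₀ K := by
  rintro J₀ hle ⟨c, hc⟩
  obtain ⟨g, hg⟩ := hsub
  apply hsep
  refine ⟨g, ?_⟩
  have h1 : conjSub g (HO O J) ≤ HO O K := by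
    rw [← HO_conjSub]
    exact HO_mono O hg
  have h2 : HO O K ≤ conjSub c (HO O J) := by
    rw [← hc]
    exact conjSub_mono c (HO_mono O hle)
  have h3 : conjSub (c⁻¹ * g) (HO O J) ≤ HO O J := by
    rw [← conjSub_conjSub]
    have := conjSub_mono c⁻¹ (h1.trans h2)
    rwa [conjSub_inv_conjSub] at this
  have h4 := eq_of_conjSub_le _ _ h3
  have h5 : conjSub g (HO O J) = conjSub c (HO O J) := by
    calc conjSub g (HO O J) = conjSub c (conjSub (c⁻¹ * g) (HO O J)) := by
          rw [conjSub_conjSub, mul_inv_cancel_left]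
      _ = conjSub c (HO O J) := by rw [h4]
  exact le_antisymm h1 (h5 ▸ h2)
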